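/- Let 𝕊 be a K×K {0,1}-matrix each of whose rows contains at least one entry 1, and S_1, …, S_K ∈ ℝ^{d×d}, with Kozyakin 𝕊-lift S^{(1)}, …, S^{(K)} ∈ ℝ^{Kd×Kd}. Then for every n ≥ 2 and every 𝕊-admissible word (i_0, …, i_{n-1}) ∈ {1,…,K}^n, one has s_{i_{n-1} i_0} · ρ(S_{i_0} ⋯ S_{i_{n-1}}) = ρ(S^{(i_0)} ⋯ S^{(i_{n-1})}). -/

import Mathlib

open MeasureTheory Filter Matrix
open scoped Kronecker
open scoped ENNReal

/-- The ℓ²-operator norm of a real square matrix. -/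
noncomputable def l2OpNorm {ι : Type*} [Fintype ι] [DecidableEq ι]
    (A : Matrix ι ι ℝ) : ℝ :=
  ‖Matrix.toEuclideanCLM (𝕜 := ℝ) A‖

/-- The spectral radius of a real square matrix: the maximum of the absolute values
of its (complex) eigenvalues. -/
noncomputable def specRad {ι : Type*} [Fintype ι] [DecidableEq ι]
    (A : Matrix ι ι ℝ) : ℝ :=
  (spectralRadius ℂ (A.map (fun x => (x : ℂ)))).toReal

/-- The ordered product `S_{w 0} * S_{w 1} * ⋯ * S_{w (n-1)}`. -/
noncomputable def wordProd {K : ℕ} {ι : Type*} [Fintype ι] [DecidableEq ι]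
    (S : Fin K → Matrix ι ι ℝ) (n : ℕ) (w : ℕ → Fin K) : Matrix ι ι ℝ :=
  (List.ofFn fun k : Fin n => S (w k)).prod

/-- The word `(w 0, …, w (n-1))` is `𝕊`-admissible. -/
def Admissible {K : ℕ} (𝕊 : Matrix (Fin K) (Fin K) ℝ) (n : ℕ) (w : ℕ → Fin K) : Prop :=
  ∀ k, k + 1 < n → 𝕊 (w k) (w (k + 1)) = 1

/-- The word `(w 0, …, w (n-1))` is `𝕊`-periodically extendable. -/
def PerExt {K : ℕ} (𝕊 : Matrix (Fin K) (Fin K) ℝ) (n : ℕ) (w : ℕ → Fin K) : Prop :=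
  Admissible 𝕊 n w ∧ 𝕊 (w (n - 1)) (w 0) = 1

/-- The Kozyakin `𝕊`-lift `S^{(k)} = (δ_kᵀ 𝕊_k) ⊗ S_k`. -/
noncomputable def kozLift {K d : ℕ} (𝕊 : Matrix (Fin K) (Fin K) ℝ)
    (S : Fin K → Matrix (Fin d) (Fin d) ℝ) (k : Fin K) :
    Matrix (Fin K × Fin d) (Fin K × Fin d) ℝ :=
  (Matrix.vecMulVec (Pi.single k 1) (𝕊 k)) ⊗ₖ S k

/-! ### Auxiliary lemmas -/

lemma aux_mem_spectrum_iff_eig {m : Type*} [Fintype m] [DecidableEq m]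
    (M : Matrix m m ℂ) (μ : ℂ) :
    μ ∈ spectrum ℂ M ↔ ∃ v ≠ 0, M *ᵥ v = μ • v := by
  rw [spectrum.mem_iff, Matrix.isUnit_iff_isUnit_det, isUnit_iff_ne_zero, not_not,
      ← Matrix.exists_mulVec_eq_zero_iff]
  constructor
  · rintro ⟨v, hv, h⟩
    refine ⟨v, hv, ?_⟩
    rw [Matrix.sub_mulVec, Algebra.algebraMap_eq_smul_one, Matrix.smul_mulVec,
      Matrix.one_mulVec, sub_eq_zero] at h
    exact h.symm
  · rintro ⟨v, hv, h⟩
    refine ⟨v, hv, ?_⟩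
    rw [Matrix.sub_mulVec, Algebra.algebraMap_eq_smul_one, Matrix.smul_mulVec,
      Matrix.one_mulVec, sub_eq_zero, h]

/-- Nonzero spectrum of `A * B` is contained in that of `B * A`, rectangular case. -/
lemma aux_spectrum_mul_comm {m p : Type*} [Fintype m] [DecidableEq m]
    [Fintype p] [DecidableEq p]
    (A : Matrix m p ℂ) (B : Matrix p m ℂ) {μ : ℂ} (hμ : μ ≠ 0)
    (h : μ ∈ spectrum ℂ (A * B)) : μ ∈ spectrum ℂ (B * A) := by
  rw [aux_mem_spectrum_iff_eig] at h ⊢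
  obtain ⟨v, hv, hAB⟩ := h
  have hBv : B *ᵥ v ≠ 0 := by
    intro h0
    apply hv
    have : (A * B) *ᵥ v = 0 := by rw [← Matrix.mulVec_mulVec, h0, Matrix.mulVec_zero]
    rw [hAB] at this
    simpa [smul_eq_zero, hμ] using this
  refine ⟨B *ᵥ v, hBv, ?_⟩
  rw [← Matrix.mulVec_mulVec] at hAB ⊢
  rw [hAB, Matrix.mulVec_smul]

lemma aux_iSup_nnnorm_eq {S T : Set ℂ} (h : S \ {0} = T \ {0}) :
    (⨆ k ∈ S, (‖k‖₊ : ℝ≥0∞)) = ⨆ k ∈ T, (‖k‖₊ : ℝ≥0∞) := by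
  have key : ∀ S T : Set ℂ, S \ {0} ⊆ T →
      (⨆ k ∈ S, (‖k‖₊ : ℝ≥0∞)) ≤ ⨆ k ∈ T, (‖k‖₊ : ℝ≥0∞) := by
    intro S T hST
    refine iSup₂_le fun k hk => ?_
    by_cases h0 : k = 0
    · simp [h0]
    · exact le_iSup₂ (f := fun k (_ : k ∈ T) => (‖k‖₊ : ℝ≥0∞)) k (hST ⟨hk, h0⟩)
  refine le_antisymm (key _ _ ?_) (key _ _ ?_)
  · rw [h]; exact Set.diff_subset
  · rw [← h]; exact Set.diff_subset

lemma aux_spectralRadius_eq {m p : Type*} [Fintype m] [DecidableEq m]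
    [Fintype p] [DecidableEq p]
    (M : Matrix m m ℂ) (N : Matrix p p ℂ)
    (h : spectrum ℂ M \ {0} = spectrum ℂ N \ {0}) :
    spectralRadius ℂ M = spectralRadius ℂ N := by
  simp only [spectralRadius]
  exact aux_iSup_nnnorm_eq h

lemma aux_vecMulVec_mul {K : ℕ} (u v : Fin K → ℝ) (i j : Fin K) :
    (Matrix.vecMulVec (Pi.single i (1:ℝ)) u) * (Matrix.vecMulVec (Pi.single j 1) v)
      = (u j) • Matrix.vecMulVec (Pi.single i 1) v := by
  ext x y
  simp only [Matrix.mul_apply, Matrix.vecMulVec_apply, Matrix.smul_apply, Pi.single_apply,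
    smul_eq_mul]
  rw [Finset.sum_eq_single j] <;> by_cases hx : x = i <;> simp_all <;> ring

lemma aux_wordProd_succ {K : ℕ} {ι : Type*} [Fintype ι] [DecidableEq ι]
    (S : Fin K → Matrix ι ι ℝ) (n : ℕ) (w : ℕ → Fin K) :
    wordProd S (n+1) w = S (w 0) * wordProd S n (fun k => w (k+1)) := by
  unfold wordProd
  rw [List.ofFn_succ, List.prod_cons]
  simp

lemma aux_wordProd_one {K : ℕ} {ι : Type*} [Fintype ι] [DecidableEq ι]
    (S : Fin K → Matrix ι ι ℝ) (w : ℕ → Fin K) :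
    wordProd S 1 w = S (w 0) := by
  simp [wordProd]

/-- structure of the product of Kozyakin lifts along an admissible word. -/
lemma aux_lift_wordProd {K d : ℕ} (𝕊 : Matrix (Fin K) (Fin K) ℝ)
    (S : Fin K → Matrix (Fin d) (Fin d) ℝ) :
    ∀ n, 1 ≤ n → ∀ w : ℕ → Fin K, Admissible 𝕊 n w →
      wordProd (kozLift 𝕊 S) n w
        = (Matrix.vecMulVec (Pi.single (w 0) 1) (𝕊 (w (n - 1)))) ⊗ₖ wordProd S n w := by
  intro n
  induction n with
  | zero => omega
  | succ n ih =>
    intro _ w hadm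
    rcases Nat.eq_zero_or_pos n with hn0 | hn1
    · subst hn0
      rw [aux_wordProd_one, aux_wordProd_one]
      rfl
    · have hadm' : Admissible 𝕊 n (fun k => w (k+1)) := by
        intro k hk
        exact hadm (k+1) (by omega)
      rw [aux_wordProd_succ, aux_wordProd_succ, ih hn1 _ hadm']
      show (Matrix.vecMulVec (Pi.single (w 0) 1) (𝕊 (w 0)) ⊗ₖ S (w 0)) * _ = _
      rw [← Matrix.mul_kronecker_mul, aux_vecMulVec_mul]
      have h1 : 𝕊 (w 0) (w 1) = 1 := hadm 0 (by omega)
      have h2 : n - 1 + 1 = n := by omega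
      rw [h2, h1, one_smul]
      simp

lemma aux_map_kronecker {l m n p : Type*} (A : Matrix l m ℝ) (B : Matrix n p ℝ) :
    ((A ⊗ₖ B : Matrix (l × n) (m × p) ℝ)).map (fun x : ℝ => (x : ℂ))
      = (A.map (fun x : ℝ => (x : ℂ))) ⊗ₖ (B.map (fun x : ℝ => (x : ℂ))) := by
  ext ⟨i, j⟩ ⟨k, l⟩
  simp only [Matrix.map_apply, Matrix.kroneckerMap_apply]
  exact Complex.ofReal_mul _ _

theorem stmt11 {K d : ℕ} (hK : 2 ≤ K) (hd : 1 ≤ d)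
    (S : Fin K → Matrix (Fin d) (Fin d) ℝ)
    (𝕊 : Matrix (Fin K) (Fin K) ℝ) (h01 : ∀ i j, 𝕊 i j = 0 ∨ 𝕊 i j = 1)
    (hrow : ∀ i, ∃ j, 𝕊 i j = 1)
    (n : ℕ) (hn : 2 ≤ n) (w : ℕ → Fin K)
    (hadm : Admissible 𝕊 n w) :
    𝕊 (w (n - 1)) (w 0) * specRad (wordProd S n w)
      = specRad (wordProd (kozLift 𝕊 S) n w) := by
  set c : ℝ := 𝕊 (w (n - 1)) (w 0) with hc
  set P : Matrix (Fin d) (Fin d) ℝ := wordProd S n w with hP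
  set Pc : Matrix (Fin d) (Fin d) ℂ := P.map (fun x => (x : ℂ)) with hPc
  -- the structure of the lifted product (over ℂ)
  have hstruct := aux_lift_wordProd 𝕊 S n (by omega) w hadm
  set e : Fin K → ℂ := fun i => ((Pi.single (w 0) 1 : Fin K → ℝ) i : ℂ) with he
  set v : Fin K → ℂ := fun j => ((𝕊 (w (n-1)) j : ℝ) : ℂ) with hv
  have hLc : (wordProd (kozLift 𝕊 S) n w).map (fun x => (x : ℂ))
      = (Matrix.vecMulVec e v) ⊗ₖ Pc := by
    rw [hstruct, aux_map_kronecker, ← hP, ← hPc]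
    ext ⟨x, i⟩ ⟨y, j⟩
    simp only [Matrix.kroneckerMap_apply, Matrix.map_apply, Matrix.vecMulVec_apply, he, hv,
      Complex.ofReal_mul]
  -- factor the rank-one Kronecker factor
  have hfact : (Matrix.vecMulVec e v) ⊗ₖ Pc
      = (Matrix.replicateCol Unit e ⊗ₖ Pc) * (Matrix.replicateRow Unit v ⊗ₖ (1 : Matrix (Fin d) (Fin d) ℂ)) := by
    rw [← Matrix.mul_kronecker_mul, ← Matrix.vecMulVec_eq, mul_one]
  -- the reversed product is (c : ℂ) • Pc up to reindexing
  have hrev : (Matrix.reindexAlgEquiv ℂ ℂ (Equiv.punitProd (Fin d)))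
      ((Matrix.replicateRow Unit v ⊗ₖ (1 : Matrix (Fin d) (Fin d) ℂ)) * (Matrix.replicateCol Unit e ⊗ₖ Pc))
      = (c : ℂ) • Pc := by
    rw [← Matrix.mul_kronecker_mul, one_mul]
    ext i j
    simp only [Matrix.reindexAlgEquiv_apply, Matrix.reindex_apply, Matrix.submatrix_apply,
      Matrix.kroneckerMap_apply, Matrix.smul_apply, smul_eq_mul]
    have : (Matrix.replicateRow Unit v * Matrix.replicateCol Unit e) ((Equiv.punitProd (Fin d)).symm i).1
        ((Equiv.punitProd (Fin d)).symm j).1 = ∑ k, v k * e k := by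
      simp [Matrix.mul_apply, Matrix.replicateRow_apply, Matrix.replicateCol_apply]
    rw [this]
    have hsum : ∑ k, v k * e k = (c : ℂ) := by
      simp only [he, hv]
      rw [Finset.sum_eq_single (w 0)] <;> simp_all [Pi.single_apply, hc]
    rw [hsum]
    rfl
  -- nonzero spectra of the two products agree
  have hspec : spectrum ℂ ((wordProd (kozLift 𝕊 S) n w).map (fun x => (x : ℂ))) \ {0}
      = spectrum ℂ ((c : ℂ) • Pc) \ {0} := by
    have hsp : spectrum ℂ ((c : ℂ) • Pc)
        = spectrum ℂ ((Matrix.replicateRow Unit v ⊗ₖ (1 : Matrix (Fin d) (Fin d) ℂ))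
            * (Matrix.replicateCol Unit e ⊗ₖ Pc)) := by
      rw [← hrev, AlgEquiv.spectrum_eq]
    rw [hLc, hfact, hsp]
    ext μ
    simp only [Set.mem_diff, Set.mem_singleton_iff]
    constructor
    · rintro ⟨h1, h2⟩
      exact ⟨aux_spectrum_mul_comm _ _ h2 h1, h2⟩
    · rintro ⟨h1, h2⟩
      exact ⟨aux_spectrum_mul_comm _ _ h2 h1, h2⟩
  have hsr : spectralRadius ℂ ((wordProd (kozLift 𝕊 S) n w).map (fun x => (x : ℂ)))
      = spectralRadius ℂ ((c : ℂ) • Pc) := aux_spectralRadius_eq _ _ hspec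
  rcases h01 (w (n-1)) (w 0) with h0 | h1
  · rw [← hc] at h0
    rw [h0]
    have hz : ((c : ℂ) • Pc) = 0 := by rw [h0]; simp
    have hz0 : spectralRadius ℂ (0 : Matrix (Fin d) (Fin d) ℂ) = 0 := by
      have hsub : spectrum ℂ (0 : Matrix (Fin d) (Fin d) ℂ) ⊆ {0} := by
        intro μ hμ
        by_contra hne
        rw [Set.mem_singleton_iff] at hne
        rw [spectrum.mem_iff, sub_zero] at hμ
        exact hμ ((isUnit_iff_ne_zero.mpr hne).map (algebraMap ℂ _))
      simp only [spectralRadius]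
      refine le_antisymm (iSup₂_le fun k hk => ?_) zero_le
      rw [Set.mem_singleton_iff.mp (hsub hk)]
      simp
    simp only [specRad]
    rw [hsr, hz, hz0]
    simp
  · rw [← hc] at h1
    rw [h1]
    have ho : ((c : ℂ) • Pc) = Pc := by rw [h1]; simp
    simp only [specRad]
    rw [hsr, ho, one_mul]
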